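/- Let w : [0,∞) → W be Lebesgue-measurable and let x : [0,∞) → ℝⁿ be differentiable with ẋ(t) = A(w(t)) x(t) for all t ≥ 0. If x(t) converges to some x̄ ∈ ℝⁿ as t → ∞, then there exists w̄ ∈ W such that A(w̄) x̄ = 0. -/

import Mathlib

open Matrix Filter

/-- `w` lies in the unit simplex `W ⊆ ℝ^M`. -/
def InSimplex {M : ℕ} (w : Fin M → ℝ) : Prop :=
  (∀ i, 0 ≤ w i) ∧ ∑ i, w i = 1

/-- The convex combination `A(w) = ∑ᵢ wᵢ Aᵢ`. -/
def Amix {n M : ℕ} (A : Fin M → Matrix (Fin n) (Fin n) ℝ) (w : Fin M → ℝ) :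
    Matrix (Fin n) (Fin n) ℝ :=
  ∑ i, w i • A i

/-- `x` is a solution of the difference inclusion generated by `A₁, …, A_M`. -/
def IsInclusionSolution {n M : ℕ} (A : Fin M → Matrix (Fin n) (Fin n) ℝ)
    (x : ℕ → Fin n → ℝ) : Prop :=
  ∃ w : ℕ → Fin M → ℝ, (∀ k, InSimplex (w k)) ∧
    ∀ k, x (k + 1) = (Amix A (w k)) *ᵥ (x k)

/-- Weak convergence: every solution of the difference inclusion has a limit. -/
def WeaklyConvergent {n M : ℕ} (A : Fin M → Matrix (Fin n) (Fin n) ℝ) : Prop :=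
  ∀ x : ℕ → Fin n → ℝ, IsInclusionSolution A x →
    ∃ xbar : Fin n → ℝ, Tendsto x atTop (nhds xbar)

/-- Strong convergence: every solution converges to a point of `⋂ᵢ ker(Aᵢ − I)`. -/
def StronglyConvergent {n M : ℕ} (A : Fin M → Matrix (Fin n) (Fin n) ℝ) : Prop :=
  ∀ x : ℕ → Fin n → ℝ, IsInclusionSolution A x →
    ∃ xbar : Fin n → ℝ, (∀ i, (A i - 1) *ᵥ xbar = 0) ∧ Tendsto x atTop (nhds xbar)

/-- if a solution `x(t)` of the differential inclusion converges to `x̄`,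
then `A(w̄) x̄ = 0` for some `w̄ ∈ W`. -/
theorem limit_is_equilibrium_of_some_mix_ct
    (n M : ℕ) (A : Fin M → Matrix (Fin n) (Fin n) ℝ)
    (w : ℝ → Fin M → ℝ) (hmeas : Measurable w)
    (hw : ∀ t : ℝ, 0 ≤ t → InSimplex (w t))
    (x : ℝ → Fin n → ℝ)
    (hx : ∀ t : ℝ, 0 ≤ t → HasDerivAt x ((Amix A (w t)) *ᵥ (x t)) t)
    (xbar : Fin n → ℝ) (hconv : Tendsto x atTop (nhds xbar)) :
    ∃ wbar : Fin M → ℝ, InSimplex wbar ∧ (Amix A wbar) *ᵥ xbar = 0 := by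
  classical
  by_contra hcon
  push_neg at hcon
  -- a generic expansion of `Amix`
  have hexp : ∀ (ww : Fin M → ℝ) (v : Fin n → ℝ),
      Amix A ww *ᵥ v = ∑ i, ww i • ((A i) *ᵥ v) := by
    intro ww v
    unfold Amix
    induction (Finset.univ : Finset (Fin M)) using Finset.induction with
    | empty => simp
    | @insert a s h ih => simp [Finset.sum_insert h, Matrix.add_mulVec,
        Matrix.smul_mulVec, ih]
  -- the linear map `w ↦ A(w) x̄`
  let L : (Fin M → ℝ) →ₗ[ℝ] (Fin n → ℝ) :=
    { toFun := fun v => Amix A v *ᵥ xbar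
      map_add' := by
        intro a b
        simp only [hexp]
        simp [add_smul, Finset.sum_add_distrib]
      map_smul' := by
        intro c a
        simp only [hexp]
        simp [smul_smul, Finset.smul_sum] }
  have hLcont : Continuous L := L.continuous_of_finiteDimensional
  set S : Set (Fin n → ℝ) := L '' stdSimplex ℝ (Fin M) with hSdef
  have hSconv : Convex ℝ S := (convex_stdSimplex ℝ (Fin M)).linear_image L
  have hScomp : IsCompact S := (isCompact_stdSimplex ℝ (Fin M)).image hLcont
  have h0 : (0 : Fin n → ℝ) ∉ S := by
    rintro ⟨v, hv, hv0⟩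
    exact hcon v ⟨hv.1, hv.2⟩ hv0
  obtain ⟨f, u, hfu, hfS⟩ :=
    geometric_hahn_banach_point_closed hSconv hScomp.isClosed h0
  have hu : 0 < u := by simpa using hfu
  -- the bounding constant
  set g : Fin M → ((Fin n → ℝ) →L[ℝ] ℝ) := fun i =>
    f.comp (LinearMap.toContinuousLinearMap ((A i).mulVecLin)) with hgdef
  set C : ℝ := ∑ i, ‖g i‖ with hCdef
  have hC0 : 0 ≤ C := Finset.sum_nonneg fun i _ => norm_nonneg _
  have hfexp : ∀ (ww : Fin M → ℝ) (v : Fin n → ℝ),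
      f (Amix A ww *ᵥ v) = ∑ i, ww i * f ((A i) *ᵥ v) := by
    intro ww v
    rw [hexp ww v, map_sum]
    simp
  -- the uniform bound
  have hbound : ∀ (ww : Fin M → ℝ), InSimplex ww → ∀ v : Fin n → ℝ,
      |f (Amix A ww *ᵥ v)| ≤ C * ‖v‖ := by
    intro ww hww v
    rw [hfexp]
    calc |∑ i, ww i * f ((A i) *ᵥ v)| ≤ ∑ i, |ww i * f ((A i) *ᵥ v)| :=
          Finset.abs_sum_le_sum_abs _ _
      _ ≤ ∑ i, ‖g i‖ * ‖v‖ := by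
          apply Finset.sum_le_sum
          intro i _
          rw [abs_mul]
          have h1 : |ww i| ≤ 1 := by
            rw [abs_of_nonneg (hww.1 i)]
            calc ww i ≤ ∑ j, ww j :=
                  Finset.single_le_sum (fun j _ => hww.1 j) (Finset.mem_univ i)
              _ = 1 := hww.2
          have h2 : |f ((A i) *ᵥ v)| ≤ ‖g i‖ * ‖v‖ := by
            have := (g i).le_opNorm v
            simpa [hgdef, Real.norm_eq_abs] using this
          calc |ww i| * |f ((A i) *ᵥ v)| ≤ 1 * (‖g i‖ * ‖v‖) :=
                mul_le_mul h1 h2 (abs_nonneg _) zero_le_one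
            _ = ‖g i‖ * ‖v‖ := one_mul _
      _ = C * ‖v‖ := by rw [hCdef, Finset.sum_mul]
  -- eventually x t is close to xbar
  set δ : ℝ := u / (2 * (C + 1)) with hδdef
  have hδ0 : 0 < δ := by positivity
  have hclose : ∀ᶠ t : ℝ in atTop, ‖x t - xbar‖ < δ := by
    have h1 : Tendsto (fun t => x t - xbar) atTop (nhds 0) := by
      simpa using hconv.sub (tendsto_const_nhds (x := xbar))
    have h2 : Tendsto (fun t => ‖x t - xbar‖) atTop (nhds 0) := by
      simpa using h1.norm
    exact (h2.eventually (eventually_lt_nhds hδ0)).mono (by intro t ht; simpa using ht)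
  obtain ⟨T₀, hT₀⟩ := eventually_atTop.1 hclose
  set T : ℝ := max T₀ 0 with hTdef
  have hT0 : (0 : ℝ) ≤ T := le_max_right _ _
  -- derivative lower bound
  have hder_lb : ∀ t : ℝ, T ≤ t → u / 2 ≤ f (Amix A (w t) *ᵥ x t) := by
    intro t ht
    have ht0 : (0 : ℝ) ≤ t := le_trans hT0 ht
    have hwt := hw t ht0
    have hmem : Amix A (w t) *ᵥ xbar ∈ S :=
      ⟨w t, ⟨hwt.1, hwt.2⟩, rfl⟩
    have hmain : u < f (Amix A (w t) *ᵥ xbar) := hfS _ hmem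
    have hdecomp : Amix A (w t) *ᵥ x t
        = Amix A (w t) *ᵥ xbar + Amix A (w t) *ᵥ (x t - xbar) := by
      have hxx : xbar + (x t - xbar) = x t := by abel
      rw [← Matrix.mulVec_add, hxx]
    have herr : |f (Amix A (w t) *ᵥ (x t - xbar))| ≤ C * ‖x t - xbar‖ :=
      hbound _ hwt _
    have hxδ : ‖x t - xbar‖ < δ := hT₀ t (le_trans (le_max_left _ _) ht)
    have herr2 : |f (Amix A (w t) *ᵥ (x t - xbar))| ≤ C * δ :=
      le_trans herr (mul_le_mul_of_nonneg_left hxδ.le hC0)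
    have hCδ : C * δ ≤ u / 2 := by
      have heq : (C + 1) * δ = u / 2 := by
        rw [hδdef]
        field_simp
      nlinarith [hδ0]
    have := abs_le.1 herr2
    rw [hdecomp, map_add]
    linarith
  -- the auxiliary function h(t) = f(x t) - (u/2) t is monotone on [T, ∞)
  set h : ℝ → ℝ := fun t => f (x t) - u / 2 * t with hhdef
  have hder : ∀ t : ℝ, 0 ≤ t →
      HasDerivAt h (f (Amix A (w t) *ᵥ x t) - u / 2) t := by
    intro t ht0
    have h1 : HasDerivAt (fun s => f (x s)) (f (Amix A (w t) *ᵥ x t)) t :=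
      f.hasFDerivAt.comp_hasDerivAt t (hx t ht0)
    have h2 : HasDerivAt (fun s : ℝ => u / 2 * s) (u / 2) t := by
      simpa using (hasDerivAt_id t).const_mul (u / 2)
    exact h1.sub h2
  have hmono : MonotoneOn h (Set.Ici T) := by
    apply monotoneOn_of_deriv_nonneg (convex_Ici T)
    · intro t ht
      exact ((hder t (le_trans hT0 ht)).continuousAt).continuousWithinAt
    · intro t ht
      rw [interior_Ici] at ht
      exact (hder t (le_trans hT0 ht.le)).differentiableAt.differentiableWithinAt
    · intro t ht
      rw [interior_Ici] at ht
      rw [(hder t (le_trans hT0 ht.le)).deriv]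
      have := hder_lb t ht.le
      linarith
  -- f (x t) tends to +∞, contradiction with convergence
  have hlb : ∀ t : ℝ, T ≤ t → f (x T) - u / 2 * T + u / 2 * t ≤ f (x t) := by
    intro t ht
    have := hmono (Set.self_mem_Ici) (Set.mem_Ici.2 ht) ht
    simp only [hhdef] at this
    linarith
  have htop : Tendsto (fun t : ℝ => f (x t)) atTop atTop := by
    apply tendsto_atTop_mono' atTop (f₁ := fun t => f (x T) - u / 2 * T + u / 2 * t)
    · filter_upwards [eventually_ge_atTop T] with t ht using hlb t ht
    · apply tendsto_atTop_add_const_left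
      exact Tendsto.const_mul_atTop (by positivity) tendsto_id
  have hnhds : Tendsto (fun t : ℝ => f (x t)) atTop (nhds (f xbar)) :=
    (f.continuous.tendsto xbar).comp hconv
  exact not_tendsto_atTop_of_tendsto_nhds hnhds htop
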